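/- For any N ∈ ℕ and any measurable functions f₁, ..., f_N with pairwise disjoint supports, the nonincreasing rearrangement of their sum satisfies (Σⱼ fⱼ)*(N t) ≥ min_{j=1,...,N} fⱼ*(t) for every t > 0. -/

import Mathlib

open MeasureTheory Set
open scoped ENNReal

/-- The nonincreasing rearrangement `f*(t) = inf {λ > 0 : μ{|f| > λ} ≤ t}`. -/
noncomputable def rearr {α : Type*} [MeasurableSpace α] (μ : Measure α) (f : α → ℝ) (t : ℝ) :
    ℝ≥0∞ :=
  sInf {l : ℝ≥0∞ | μ {x | l < ENNReal.ofReal |f x|} ≤ ENNReal.ofReal t}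

/-- For functions `f₁, …, f_N` with pairwise disjoint supports,
`(∑ⱼ fⱼ)*(N t) ≥ min_j fⱼ*(t)` for every `t > 0`. -/
theorem rearr_sum_disjoint_ge {α : Type*} [MeasurableSpace α] (μ : Measure α) [SigmaFinite μ]
    (N : ℕ) (hN : 0 < N) (f : Fin N → α → ℝ) (hf : ∀ j, Measurable (f j))
    (hdisj : Pairwise fun i j => Disjoint (Function.support (f i)) (Function.support (f j)))
    (t : ℝ) (ht : 0 < t) :
    (⨅ j, rearr μ (f j) t) ≤ rearr μ (fun x => ∑ j, f j x) (N * t) := by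
  apply le_sInf
  intro l hl
  simp only [Set.mem_setOf_eq] at hl
  set A : Fin N → Set α := fun j => {x | l < ENNReal.ofReal |f j x|} with hA
  have hAsub : ∀ j, A j ⊆ Function.support (f j) := by
    intro j x hx
    simp only [A, Set.mem_setOf_eq] at hx
    intro hfx
    simp [show f j x = 0 from hfx] at hx
  -- each A j is contained in the superlevel set of the sum
  have hsub : (⋃ j, A j) ⊆ {x | l < ENNReal.ofReal |∑ j, f j x|} := by
    intro x hx
    obtain ⟨j, hj⟩ := Set.mem_iUnion.mp hx
    have hsum : ∑ i, f i x = f j x := by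
      rw [Finset.sum_eq_single j]
      · intro i _ hij
        by_contra h
        exact (hdisj hij).le_bot ⟨h, hAsub j hj⟩
      · intro h; exact absurd (Finset.mem_univ j) h
    simpa [hsum, A] using hj
  have hmeasA : ∀ j, MeasurableSet (A j) := by
    intro j
    exact measurableSet_lt measurable_const
      (ENNReal.measurable_ofReal.comp (hf j).abs)
  have hdisjA : Pairwise (Function.onFun Disjoint A) := fun i j hij =>
    ((hdisj hij).mono (hAsub i) (hAsub j))
  have hsum_le : ∑ j, μ (A j) ≤ ENNReal.ofReal (N * t) := by
    calc ∑ j, μ (A j) = ∑' j, μ (A j) := (tsum_fintype _).symm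
      _ = μ (⋃ j, A j) := (measure_iUnion hdisjA hmeasA).symm
      _ ≤ μ {x | l < ENNReal.ofReal |∑ j, f j x|} := measure_mono hsub
      _ ≤ ENNReal.ofReal (N * t) := hl
  -- pigeonhole: some j has μ (A j) ≤ ofReal t
  have hNt : ENNReal.ofReal (N * t) = (N : ℝ≥0∞) * ENNReal.ofReal t := by
    rw [ENNReal.ofReal_mul (Nat.cast_nonneg N), ENNReal.ofReal_natCast]
  obtain ⟨j, hj⟩ : ∃ j, μ (A j) ≤ ENNReal.ofReal t := by
    by_contra h
    push_neg at h
    have hlt : ∑ _j : Fin N, ENNReal.ofReal t < ∑ j, μ (A j) :=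
      ENNReal.sum_lt_sum_of_nonempty (Finset.univ_nonempty_iff.mpr ⟨⟨0, hN⟩⟩)
        (fun i _ => h i)
    rw [Finset.sum_const, Finset.card_univ, Fintype.card_fin, nsmul_eq_mul] at hlt
    exact absurd (hsum_le.trans_eq hNt) (not_le.mpr hlt)
  exact le_trans (iInf_le _ j) (sInf_le hj)
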